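/- Let f: S¹ → S¹ be a continuous map commuting with the antipodal map a(z) = −z, i.e. f(−z) = −f(z) for all z ∈ S¹ ⊂ ℂ. Then the degree of f is odd. -/
import Mathlib

/-- helper for the intermediate value argument -/
lemma int_valued_aux (G : ℝ → ℝ) (hG : Continuous G)
    (hint : ∀ x : ℝ, ∃ n : ℤ, G x = n) (a b : ℝ) (n m : ℤ)
    (hn : G a = n) (hm : G b = m) (h : n < m) : False := by
  have h1 : (n : ℝ) + 1 ≤ (m : ℝ) := by exact_mod_cast h
  have hmem : (n : ℝ) + 1/2 ∈ Set.uIcc (G a) (G b) := by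
    rw [hn, hm, Set.mem_uIcc]
    left; constructor <;> linarith
  obtain ⟨t, _, ht⟩ := intermediate_value_uIcc (hG.continuousOn (s := Set.uIcc a b)) hmem
  obtain ⟨k, hk⟩ := hint t
  rw [hk] at ht
  have h2 : (2 * k : ℝ) = 2 * n + 1 := by linarith
  have h3 : 2 * k = 2 * n + 1 := by exact_mod_cast h2
  omega

/-- A continuous real function taking only integer values takes equal values everywhere. -/
lemma int_valued_constant (G : ℝ → ℝ) (hG : Continuous G)
    (hint : ∀ x : ℝ, ∃ n : ℤ, G x = n) (a b : ℝ) : G a = G b := by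
  obtain ⟨n, hn⟩ := hint a
  obtain ⟨m, hm⟩ := hint b
  rcases lt_trichotomy n m with h | h | h
  · exact absurd (int_valued_aux G hG hint a b n m hn hm h) (not_false)
  · rw [hn, hm, h]
  · exact absurd (int_valued_aux G hG hint b a m n hm hn h) (not_false)

/-- A continuous self-map `f` of the circle `ℝ/ℤ` commuting with the antipodal
map (translation by `1/2`) has odd degree.  Here `F : ℝ → ℝ` is a continuous lift of `f`
through the universal cover, and `d` is the degree of `f`, i.e. `F (x + 1) = F x + d`. -/
theorem degree_odd_of_antipodal_equivariant
    (f : C(AddCircle (1 : ℝ), AddCircle (1 : ℝ))) (F : ℝ → ℝ) (hF : Continuous F)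
    (hlift : ∀ x : ℝ, f (x : AddCircle (1 : ℝ)) = ((F x : ℝ) : AddCircle (1 : ℝ)))
    (d : ℤ) (hdeg : ∀ x : ℝ, F (x + 1) = F x + d)
    (hanti : ∀ p : AddCircle (1 : ℝ),
      f (p + (((1 : ℝ) / 2 : ℝ) : AddCircle (1 : ℝ)))
        = f p + (((1 : ℝ) / 2 : ℝ) : AddCircle (1 : ℝ))) :
    Odd d := by
  set G : ℝ → ℝ := fun x => F (x + 1/2) - F x - 1/2 with hGdef
  have hG : Continuous G := by
    apply Continuous.sub
    · exact (hF.comp (continuous_id.add continuous_const)).sub hF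
    · exact continuous_const
  have hint : ∀ x : ℝ, ∃ n : ℤ, G x = n := by
    intro x
    have h1 : ((F (x + 1/2) : ℝ) : AddCircle (1 : ℝ))
        = ((F x + 1/2 : ℝ) : AddCircle (1 : ℝ)) := by
      have := hanti ((x : ℝ) : AddCircle (1 : ℝ))
      rw [hlift x] at this
      have hc : ((x : ℝ) : AddCircle (1 : ℝ)) + (((1:ℝ)/2 : ℝ) : AddCircle (1 : ℝ))
          = ((x + 1/2 : ℝ) : AddCircle (1 : ℝ)) := by
        norm_num [← QuotientAddGroup.mk_add]
      rw [hc, hlift (x + 1/2)] at this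
      rw [this, ← QuotientAddGroup.mk_add]
    have h2 : ((F (x + 1/2) - (F x + 1/2) : ℝ) : AddCircle (1 : ℝ)) = 0 := by
      rw [QuotientAddGroup.mk_sub, h1, sub_self]
    rw [AddCircle.coe_eq_zero_iff] at h2
    obtain ⟨n, hn⟩ := h2
    refine ⟨n, ?_⟩
    simp only [hGdef]
    simp only [zsmul_eq_mul, mul_one] at hn
    linarith
  have hconst := int_valued_constant G hG hint 0 (1/2)
  obtain ⟨n, hn⟩ := hint 0
  have key : (d : ℝ) = 2 * n + 1 := by
    have h1 : F (0 + 1) = F 0 + d := hdeg 0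
    have e1 : G 0 = F (1/2) - F 0 - 1/2 := by simp [hGdef]
    have e2 : G (1/2) = F 1 - F (1/2) - 1/2 := by norm_num [hGdef]
    have hn2 : G (1/2) = n := by rw [← hconst]; exact hn
    rw [hn] at e1
    rw [hn2] at e2
    norm_num at h1
    linarith
  have : d = 2 * n + 1 := by exact_mod_cast key
  exact ⟨n, by omega⟩
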